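/- Let G be a non-abelian simple group generated by a set X ⊆ G, and suppose there exist x, y ∈ X with x*y ≠ y*x and a word w over X^{±1} such that the word x :: y :: w has product 1. Then every element of G is a palindrome with respect to the generating set X ∪ {x*y}; in particular pw(G, X ∪ {x*y}) = 1, and this generating set is obtained from X by adding at most one element. -/

import Mathlib

/-- An element `g` of a group `G` is a palindrome with respect to `X ⊆ G` if `g` is the
product of some word over `X^{±1}` that equals its own reverse. -/
def IsPalindrome {G : Type*} [Group G] (X : Set G) (g : G) : Prop :=
  ∃ l : List G, (∀ t ∈ l, t ∈ X ∪ X⁻¹) ∧ l.reverse = l ∧ l.prod = g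

/-- Let `G` be a non-abelian simple group generated by `X`, with
non-commuting `x, y ∈ X` and a word `w` over `X^{±1}` such that `x :: y :: w` has
product `1`. Then every element of `G` is a palindrome with respect to `X ∪ {x*y}`,
i.e. `pw(G, X ∪ {x*y}) = 1`. -/
theorem simple_group_palindromic_width_one_after_adding_generator {G : Type*} [Group G]
    [IsSimpleGroup G] (hna : ∃ a b : G, a * b ≠ b * a)
    (X : Set G) (hX : Subgroup.closure X = ⊤)
    (x y : G) (hx : x ∈ X) (hy : y ∈ X) (hxy : x * y ≠ y * x)
    (w : List G) (hw : ∀ t ∈ w, t ∈ X ∪ X⁻¹)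
    (hrel : (x :: y :: w).prod = 1) :
    ∀ g : G, IsPalindrome (X ∪ {x * y}) g := by
  set S : Set G := X ∪ {x * y} with hS
  set T : Set (G × G) := (fun s => (s, s⁻¹)) '' S with hT
  set D : Subgroup (G × G) := Subgroup.closure T with hD
  -- basic membership
  have hmemD : ∀ s ∈ S, (s, s⁻¹) ∈ D := fun s hs =>
    Subgroup.subset_closure ⟨s, hs, rfl⟩
  have hxS : x ∈ S := Or.inl hx
  have hyS : y ∈ S := Or.inl hy
  have hxyS : x * y ∈ S := Or.inr rfl
  -- first projection surjective onto closure X = ⊤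
  have hfst : ∀ g : G, ∃ b : G, (g, b) ∈ D := by
    intro g
    have : g ∈ D.map (MonoidHom.fst G G) := by
      have hle : Subgroup.closure X ≤ D.map (MonoidHom.fst G G) := by
        rw [Subgroup.closure_le]
        intro s hs
        exact ⟨(s, s⁻¹), hmemD s (Or.inl hs), rfl⟩
      rw [hX] at hle
      exact hle trivial
    obtain ⟨⟨a, b⟩, hab, rfl⟩ := this
    exact ⟨b, hab⟩
  -- second projection surjective
  have hsnd : ∀ g : G, ∃ a : G, (a, g) ∈ D := by
    intro g
    have : g ∈ D.map (MonoidHom.snd G G) := by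
      have hle : Subgroup.closure X ≤ D.map (MonoidHom.snd G G) := by
        rw [Subgroup.closure_le]
        intro s hs
        exact ⟨(s⁻¹, s), by simpa using (D.inv_mem (hmemD s (Or.inl hs))), rfl⟩
      rw [hX] at hle
      exact hle trivial
    obtain ⟨⟨a, b⟩, hab, rfl⟩ := this
    exact ⟨a, hab⟩
  -- the normal subgroup N' = {h | (1,h) ∈ D}
  set N : Subgroup G := D.comap (MonoidHom.inr G G) with hN
  have hNnormal : N.Normal := by
    constructor
    intro h hh b
    obtain ⟨a, hab⟩ := hsnd b
    have : (a, b) * (1, h) * (a, b)⁻¹ ∈ D := D.mul_mem (D.mul_mem hab hh) (D.inv_mem hab)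
    show MonoidHom.inr G G (b * h * b⁻¹) ∈ D
    simpa [MonoidHom.inr, mul_assoc] using this
  -- the commutator is in N
  have hcomm : x⁻¹ * y⁻¹ * (x * y) ∈ N := by
    have h1 : (x, x⁻¹) * (y, y⁻¹) * ((x * y), (x * y)⁻¹)⁻¹ ∈ D :=
      D.mul_mem (D.mul_mem (hmemD x hxS) (hmemD y hyS)) (D.inv_mem (hmemD _ hxyS))
    have : (x, x⁻¹) * (y, y⁻¹) * ((x * y), (x * y)⁻¹)⁻¹ = (1, x⁻¹ * y⁻¹ * (x * y)) := by
      ext <;> simp [mul_assoc]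
    rw [this] at h1
    exact h1
  have hNtop : N = ⊤ := by
    rcases hNnormal.eq_bot_or_eq_top with hbot | htop
    · exfalso
      rw [hbot] at hcomm
      have : x⁻¹ * y⁻¹ * (x * y) = 1 := hcomm
      apply hxy
      calc x * y = (y * x) * (x⁻¹ * y⁻¹ * (x * y)) := by group
        _ = y * x := by rw [this, mul_one]
    · exact htop
  -- D = ⊤
  have hDtop : D = ⊤ := by
    rw [eq_top_iff]
    rintro ⟨g, h⟩ -
    obtain ⟨b, hgb⟩ := hfst g
    have h1 : (1, b⁻¹ * h) ∈ D := by
      have : b⁻¹ * h ∈ N := hNtop ▸ Subgroup.mem_top _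
      exact this
    have := D.mul_mem hgb h1
    simpa using this
  -- extract the list
  intro g
  have hg0 : ((g, 1) : G × G) ∈ D := by rw [hDtop]; trivial
  have hg : ((g, 1) : G × G) ∈ Submonoid.closure (T ∪ T⁻¹) := by
    rw [← Subgroup.closure_toSubmonoid]
    exact hg0
  obtain ⟨L, hL, hLprod⟩ := Submonoid.exists_list_of_mem_closure hg
  have hletter : ∀ p ∈ L, p.1 ∈ S ∪ S⁻¹ ∧ p.2 = p.1⁻¹ := by
    intro p hp
    rcases hL p hp with h | h
    · obtain ⟨s, hs, rfl⟩ := h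
      exact ⟨Or.inl hs, rfl⟩
    · obtain ⟨s, hs, hps⟩ := h
      have hp2 : p = (s⁻¹, s) := by
        have h' : p⁻¹ = (s, s⁻¹) := hps.symm
        rw [← inv_inv p, h']
        ext <;> simp
      subst hp2
      refine ⟨Or.inr ?_, by simp⟩
      simpa using hs
  set l : List G := L.map Prod.fst with hl
  have hprod1 : l.prod = g := by
    have := congrArg Prod.fst hLprod
    simpa [hl, List.prod_map_hom] using (map_list_prod (MonoidHom.fst G G) L).symm.trans this
  have hprod2 : (l.map fun t => t⁻¹).prod = 1 := by
    have h2 : (L.map Prod.snd).prod = 1 := by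
      have := congrArg Prod.snd hLprod
      exact (map_list_prod (MonoidHom.snd G G) L).symm.trans this
    have : L.map Prod.snd = l.map fun t => t⁻¹ := by
      rw [hl, List.map_map]
      exact List.map_congr_left fun p hp => (hletter p hp).2
    rwa [this] at h2
  have hrevprod : l.reverse.prod = 1 := by
    rw [List.prod_reverse_noncomm, hprod2]; simp
  refine ⟨l ++ l.reverse, ?_, ?_, ?_⟩
  · intro t ht
    rcases List.mem_append.1 ht with h | h
    · obtain ⟨p, hp, rfl⟩ := List.mem_map.1 (hl ▸ h)
      exact (hletter p hp).1
    · obtain ⟨p, hp, rfl⟩ := List.mem_map.1 (hl ▸ List.mem_reverse.1 h)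
      exact (hletter p hp).1
  · simp
  · rw [List.prod_append, hprod1, hrevprod, mul_one]
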